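/- The eigensequence of the Stirling transform satisfies, for every n ≥ 0: C_{n+2} = Σ_{k=0}^n S(n,k)·(C_{k+1} + k·C_k). -/

import Mathlib

/-- Stirling numbers of the second kind. -/
def S2 : ℕ → ℕ → ℕ
  | 0, 0 => 1
  | 0, _ + 1 => 0
  | _ + 1, 0 => 0
  | n + 1, m + 1 => (m + 1) * S2 n (m + 1) + S2 n m

lemma S2_eq_zero : ∀ n m : ℕ, n < m → S2 n m = 0
  | 0, _ + 1, _ => rfl
  | n + 1, m + 1, h => by
    have h1 : n < m + 1 := by omega
    have h2 : n < m := by omega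
    simp [S2, S2_eq_zero n (m + 1) h1, S2_eq_zero n m h2]

/-- If `c` is the eigensequence of the Stirling transform, then
`C_{n+2} = ∑_{k=0}^n S(n,k) (C_{k+1} + k C_k)`. -/
theorem eigensequence_recurrence (c : ℕ → ℝ) (h0 : c 0 = 0) (h1 : c 1 = 1)
    (hrec : ∀ n, 1 ≤ n → c (n + 1) = ∑ k ∈ Finset.range (n + 1), c k * S2 n k) (n : ℕ) :
    c (n + 2) = ∑ k ∈ Finset.range (n + 1), (S2 n k : ℝ) * (c (k + 1) + k * c k) := by
  have key := hrec (n + 1) (by omega)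
  rw [Finset.sum_range_succ' _ (n + 1)] at key
  have h2 : c (n + 2) = ∑ k ∈ Finset.range (n + 1),
      c (k + 1) * ((k + 1) * S2 n (k + 1) + S2 n k) := by
    simpa [S2, h0] using key
  have hshift : ∑ k ∈ Finset.range (n + 1), (((k : ℝ) + 1) * c (k + 1) * S2 n (k + 1))
      = ∑ k ∈ Finset.range (n + 1), ((k : ℝ) * c k * S2 n k) := by
    have e1 := Finset.sum_range_succ' (fun k => (k : ℝ) * c k * (S2 n k : ℝ)) (n + 1)
    rw [Finset.sum_range_succ, S2_eq_zero n (n + 1) (by omega)] at e1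
    simp only [Nat.cast_zero, zero_mul, mul_zero, add_zero] at e1
    rw [e1]
    exact Finset.sum_congr rfl fun k _ => by push_cast; ring
  calc c (n + 2)
      = ∑ k ∈ Finset.range (n + 1),
          ((((k : ℝ) + 1) * c (k + 1) * S2 n (k + 1)) + c (k + 1) * S2 n k) := by
        rw [h2]; exact Finset.sum_congr rfl fun k _ => by push_cast; ring
    _ = (∑ k ∈ Finset.range (n + 1), (((k : ℝ) + 1) * c (k + 1) * S2 n (k + 1)))
        + ∑ k ∈ Finset.range (n + 1), c (k + 1) * S2 n k := Finset.sum_add_distrib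
    _ = (∑ k ∈ Finset.range (n + 1), ((k : ℝ) * c k * S2 n k))
        + ∑ k ∈ Finset.range (n + 1), c (k + 1) * S2 n k := by rw [hshift]
    _ = ∑ k ∈ Finset.range (n + 1), (S2 n k : ℝ) * (c (k + 1) + k * c k) := by
        rw [← Finset.sum_add_distrib]
        exact Finset.sum_congr rfl fun k _ => by ring
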